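/- Let $s, y \in \mathbb{R}^n$ with $s^T y > 0$ and suppose $\frac{\|s\|^2}{s^Ty} > \frac{s^Ty}{\|y\|^2}$ (i.e., $\alpha^{BB1} > \alpha^{BB2}$). Then for every $\gamma > 0$, $\alpha^{BB}(\gamma) = \frac{\|s\|^2 - \|y\|^2/\gamma^2 + \sqrt{(\|s\|^2 - \|y\|^2/\gamma^2)^2 + 4(s^Ty)^2/\gamma^2}}{2 s^T y}$ satisfies the strict inequalities $\alpha^{BB2} < \alpha^{BB}(\gamma) < \alpha^{BB1}$, and hence there exists a unique $\tau \in (0,1)$ with $\alpha^{BB}(\gamma) = \tau\,\alpha^{BB1} + (1-\tau)\,\alpha^{BB2}$, namely $\tau = \frac{\alpha^{BB}(\gamma) - \alpha^{BB2}}{\alpha^{BB1} - \alpha^{BB2}}$. -/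
import Mathlib

theorem aux8 (A B c γ : ℝ) (hc : 0 < c) (hγ : 0 < γ) (hA : 0 < A) (hB : 0 < B)
    (hcab : c ^ 2 < A * B) :
    c / B < (A - B / γ ^ 2 + Real.sqrt ((A - B / γ ^ 2) ^ 2 + 4 * c ^ 2 / γ ^ 2)) / (2 * c) ∧
    (A - B / γ ^ 2 + Real.sqrt ((A - B / γ ^ 2) ^ 2 + 4 * c ^ 2 / γ ^ 2)) / (2 * c) < A / c := by
  set D : ℝ := A - B / γ ^ 2 with hD
  set E : ℝ := D ^ 2 + 4 * c ^ 2 / γ ^ 2 with hE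
  have hγ2 : 0 < γ ^ 2 := by positivity
  have hEpos : 0 < E := by positivity
  have hSpos : 0 < Real.sqrt E := Real.sqrt_pos.mpr hEpos
  constructor
  · have hSgt : 2 * c ^ 2 / B - D < Real.sqrt E := by
      rcases le_or_gt (2 * c ^ 2 / B - D) 0 with h | h
      · exact h.trans_lt hSpos
      · rw [← Real.sqrt_sq h.le]
        apply Real.sqrt_lt_sqrt (by positivity)
        have h1 : (2 * c ^ 2 / B - D) ^ 2 = 4 * c ^ 4 / B ^ 2 - 4 * c ^ 2 * D / B + D ^ 2 := by
          rw [hD]; field_simp; ring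
        have h2 : 4 * c ^ 4 / B ^ 2 - 4 * c ^ 2 * D / B + 4 * c ^ 2 * (A * B - c ^ 2) / B ^ 2
            = 4 * c ^ 2 / γ ^ 2 := by
          rw [hD]; field_simp; ring
        have h3 : 0 < 4 * c ^ 2 * (A * B - c ^ 2) / B ^ 2 := by
          apply div_pos _ (by positivity)
          have : 0 < A * B - c ^ 2 := by linarith
          positivity
        rw [h1, hE]
        linarith
    have h4 := mul_lt_mul_of_pos_left hSgt hB
    have h5 : B * (2 * c ^ 2 / B - D) = 2 * c ^ 2 - B * D := by field_simp
    rw [h5] at h4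
    rw [div_lt_div_iff₀ hB (by positivity)]
    nlinarith [h4]
  · have hSlt : Real.sqrt E < A + B / γ ^ 2 := by
      rw [← Real.sqrt_sq (by positivity : (0:ℝ) ≤ A + B / γ ^ 2)]
      apply Real.sqrt_lt_sqrt hEpos.le
      have h6 : (A + B / γ ^ 2) ^ 2 - D ^ 2 = 4 * A * B / γ ^ 2 := by
        rw [hD]; field_simp; ring
      have h7 : 4 * c ^ 2 / γ ^ 2 < 4 * A * B / γ ^ 2 := by
        rw [div_lt_div_iff₀ hγ2 hγ2]; nlinarith
      rw [hE]; linarith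
    have h8 : (D + Real.sqrt E) * c < 2 * A * c := by
      apply mul_lt_mul_of_pos_right _ hc
      rw [hD]; linarith
    rw [div_lt_div_iff₀ (by positivity) hc]
    nlinarith [h8]

theorem stmt_8 (n : ℕ) (s y : Fin n → ℝ) (hsy : 0 < ∑ i, s i * y i)
    (hgt : (∑ i, s i * y i) / (∑ i, y i ^ 2) < (∑ i, s i ^ 2) / (∑ i, s i * y i))
    (γ : ℝ) (hγ : 0 < γ) :
    let c : ℝ := ∑ i, s i * y i
    let αBB1 : ℝ := (∑ i, s i ^ 2) / c
    let αBB2 : ℝ := c / (∑ i, y i ^ 2)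
    let αγ : ℝ := ((∑ i, s i ^ 2) - (∑ i, y i ^ 2) / γ ^ 2 +
      Real.sqrt (((∑ i, s i ^ 2) - (∑ i, y i ^ 2) / γ ^ 2) ^ 2 + 4 * c ^ 2 / γ ^ 2)) / (2 * c)
    let τ : ℝ := (αγ - αBB2) / (αBB1 - αBB2)
    αBB2 < αγ ∧ αγ < αBB1 ∧ τ ∈ Set.Ioo (0:ℝ) 1 ∧
    αγ = τ * αBB1 + (1 - τ) * αBB2 ∧
    ∀ τ' : ℝ, τ' ∈ Set.Ioo (0:ℝ) 1 → αγ = τ' * αBB1 + (1 - τ') * αBB2 → τ' = τ := by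
  intro c αBB1 αBB2 αγ τ
  have hc : 0 < c := hsy
  have cauchy : (∑ i, s i * y i) ^ 2 ≤ (∑ i, s i ^ 2) * ∑ i, y i ^ 2 :=
    Finset.sum_mul_sq_le_sq_mul_sq Finset.univ s y
  have hAB : 0 < (∑ i, s i ^ 2) * ∑ i, y i ^ 2 := lt_of_lt_of_le (by positivity) cauchy
  have hA0 : (0:ℝ) ≤ ∑ i, s i ^ 2 := by positivity
  have hB0 : (0:ℝ) ≤ ∑ i, y i ^ 2 := by positivity
  have hA : 0 < ∑ i, s i ^ 2 := by nlinarith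
  have hB : 0 < ∑ i, y i ^ 2 := by nlinarith
  have hcab : c ^ 2 < (∑ i, s i ^ 2) * ∑ i, y i ^ 2 := by
    have := (div_lt_div_iff₀ hB hc).mp hgt
    nlinarith [this]
  obtain ⟨h1, h2⟩ := aux8 (∑ i, s i ^ 2) (∑ i, y i ^ 2) c γ hc hγ hA hB hcab
  have h1' : αBB2 < αγ := h1
  have h2' : αγ < αBB1 := h2
  have hd : 0 < αBB1 - αBB2 := by linarith
  have hτ : τ = (αγ - αBB2) / (αBB1 - αBB2) := rfl
  clear_value c αBB1 αBB2 αγ τ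
  have hkey : τ * (αBB1 - αBB2) = αγ - αBB2 := by
    rw [hτ]; exact div_mul_cancel₀ _ hd.ne'
  have hid : αγ = τ * αBB1 + (1 - τ) * αBB2 := by linear_combination -hkey
  refine ⟨h1', h2', ⟨by rw [hτ]; exact div_pos (by linarith) hd, by rw [hτ]; exact (div_lt_one hd).mpr (by linarith)⟩,
    hid, ?_⟩
  intro τ' _ heq
  have h0 : (τ' - τ) * (αBB1 - αBB2) = 0 := by linear_combination hid - heq
  rcases mul_eq_zero.mp h0 with h | h
  · linarith
  · exact absurd h hd.ne'
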